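/- Let H be the group with presentation ⟨x₁, x₂, x₃, … | x_i = [x_{2i}, x_{2i+1}] for all i ≥ 1⟩. Then for every prime p, the image of the generator x₁ in H has no p-th root: there is no y ∈ H with y^p = x₁. In particular H is not uniquely p-divisible for any prime p. -/

import Mathlib

open scoped commutatorElement


/-- Discrete antiderivative: `ant f k - ant f (k-1) = f k`. -/
noncomputable def ant (f : ℤ → ℤ) (k : ℤ) : ℤ :=
  (Finset.Ioc 0 k).sum f - (Finset.Ioc k 0).sum f

lemma ant_sub (f : ℤ → ℤ) (k : ℤ) : ant f k - ant f (k - 1) = f k := by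
  unfold ant
  rcases le_or_gt 1 k with h | h
  · have h1 : Finset.Ioc (0:ℤ) k = insert k (Finset.Ioc 0 (k-1)) := by
      ext a; simp only [Finset.mem_Ioc, Finset.mem_insert]; omega
    have h2 : Finset.Ioc k (0:ℤ) = ∅ := Finset.Ioc_eq_empty (by omega)
    have h3 : Finset.Ioc (k-1) (0:ℤ) = ∅ := Finset.Ioc_eq_empty (by omega)
    rw [h1, h2, h3, Finset.sum_insert (by simp)]
    simp
  · have h1 : Finset.Ioc (0:ℤ) k = ∅ := Finset.Ioc_eq_empty (by omega)
    have h2 : Finset.Ioc (0:ℤ) (k-1) = ∅ := Finset.Ioc_eq_empty (by omega)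
    have h3 : Finset.Ioc (k-1) (0:ℤ) = insert k (Finset.Ioc k 0) := by
      ext a; simp only [Finset.mem_Ioc, Finset.mem_insert]; omega
    rw [h1, h2, h3, Finset.sum_insert (by simp)]
    simp

/-- The base `p`-cycle on `{0, …, p-1} ⊆ ℤ`. -/
def sigma (p : ℕ) : Equiv.Perm ℤ where
  toFun a := if 0 ≤ a ∧ a + 1 < p then a + 1 else if 0 ≤ a ∧ a + 1 = p then 0 else a
  invFun a := if 0 < a ∧ a < p then a - 1 else if a = 0 ∧ 0 < (p:ℤ) then p - 1 else a
  left_inv a := by simp only; split_ifs <;> omega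
  right_inv a := by simp only; split_ifs <;> omega

/-- Descriptors for a self-similar family of permutations of `ℤ × ℤ`. -/
inductive D where
  | W (f : ℤ → ℤ)
  | V (f : ℤ → ℤ)
  | H (f : ℤ → ℤ)

/-- Evaluation of a descriptor as a permutation of `ℤ × ℤ`. -/
def evalD (p : ℕ) : D → Equiv.Perm (ℤ × ℤ)
  | .W f =>
    { toFun := fun x => ((sigma p ^ f x.2) x.1, x.2)
      invFun := fun x => ((sigma p ^ f x.2)⁻¹ x.1, x.2)
      left_inv := fun x => by simp
      right_inv := fun x => by simp }
  | .V f =>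
    { toFun := fun x => (x.1, x.2 + f x.1)
      invFun := fun x => (x.1, x.2 - f x.1)
      left_inv := fun x => by simp
      right_inv := fun x => by simp }
  | .H f =>
    { toFun := fun x => (x.1 + f x.2, x.2)
      invFun := fun x => (x.1 - f x.2, x.2)
      left_inv := fun x => by simp
      right_inv := fun x => by simp }

/-- Left parent of a descriptor. -/
noncomputable def DL : D → D
  | .W f => .W (ant f)
  | .V f => .V (ant f)
  | .H f => .H (ant f)

/-- Right parent of a descriptor. -/
def DR : D → D
  | .W _ => .V (fun _ => 1)
  | .V _ => .H (fun _ => 1)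
  | .H _ => .V (fun _ => 1)

lemma evalD_commutator (p : ℕ) (d : D) :
    evalD p d = ⁅evalD p (DL d), evalD p (DR d)⁆ := by
  have key : ∀ f k, sigma p ^ ant f k * (sigma p ^ ant f (k - 1))⁻¹ = sigma p ^ f k := by
    intro f k
    rw [← zpow_neg, ← zpow_add, ← ant_sub f k]
    ring_nf
  cases d with
  | W f =>
    ext x
    · show ((sigma p ^ f x.2) x.1, x.2).1 = _
      simp only [commutatorElement_def, DL, DR, evalD, Equiv.Perm.coe_mul, Function.comp_apply,
        Equiv.coe_fn_mk, Equiv.Perm.inv_def, Equiv.coe_fn_symm_mk]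
      rw [← key f x.2]
      simp [Equiv.Perm.mul_apply]
    · show x.2 = _
      simp only [commutatorElement_def, DL, DR, evalD, Equiv.Perm.coe_mul, Function.comp_apply,
        Equiv.coe_fn_mk, Equiv.Perm.inv_def, Equiv.coe_fn_symm_mk]
      omega
  | V f =>
    ext x
    · show x.1 = _
      simp only [commutatorElement_def, DL, DR, evalD, Equiv.Perm.coe_mul, Function.comp_apply,
        Equiv.coe_fn_mk, Equiv.Perm.inv_def, Equiv.coe_fn_symm_mk]
      omega
    · show x.2 + f x.1 = _
      have h1 := ant_sub f x.1
      simp only [commutatorElement_def, DL, DR, evalD, Equiv.Perm.coe_mul, Function.comp_apply,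
        Equiv.coe_fn_mk, Equiv.Perm.inv_def, Equiv.coe_fn_symm_mk]
      rw [show x.1 - 1 + 1 = x.1 by ring]
      omega
  | H f =>
    ext x
    · show x.1 + f x.2 = _
      have h1 := ant_sub f x.2
      simp only [commutatorElement_def, DL, DR, evalD, Equiv.Perm.coe_mul, Function.comp_apply,
        Equiv.coe_fn_mk, Equiv.Perm.inv_def, Equiv.coe_fn_symm_mk]
      rw [show x.2 - 1 + 1 = x.2 by ring]
      omega
    · show x.2 = _
      simp only [commutatorElement_def, DL, DR, evalD, Equiv.Perm.coe_mul, Function.comp_apply,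
        Equiv.coe_fn_mk, Equiv.Perm.inv_def, Equiv.coe_fn_symm_mk]
      omega

/-- The relators `xᵢ · ⁅x_{2i}, x_{2i+1}⁆⁻¹` of Berrick and Casacuberta's group `𝓗`,
on generators indexed by the positive integers. -/
def hRels : Set (FreeGroup ℕ+) :=
  {r | ∃ i : ℕ+, r = FreeGroup.of i * ⁅FreeGroup.of (2 * i), FreeGroup.of (2 * i + 1)⁆⁻¹}

def delta : ℤ → ℤ := fun k => if k = 0 then 1 else 0

/-- The tree of descriptors: `tr 1` is the top, and `tr (2n), tr (2n+1)` are the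
parents whose commutator is `tr n`. -/
noncomputable def tr : ℕ → D
  | 0 => .V (fun _ => 0)
  | 1 => .W delta
  | (n + 2) => if (n + 2) % 2 = 0 then DL (tr ((n + 2) / 2)) else DR (tr ((n + 2) / 2))
decreasing_by all_goals { simp_wf; omega }

lemma tr_two_mul (n : ℕ) (hn : 1 ≤ n) : tr (2 * n) = DL (tr n) := by
  obtain ⟨m, rfl⟩ : ∃ m, n = m + 1 := ⟨n - 1, by omega⟩
  rw [show 2 * (m + 1) = (2 * m) + 2 by ring, tr]
  have h1 : (2 * m + 2) % 2 = 0 := by omega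
  have h2 : (2 * m + 2) / 2 = m + 1 := by omega
  simp [h1, h2]

lemma tr_two_mul_add_one (n : ℕ) (hn : 1 ≤ n) : tr (2 * n + 1) = DR (tr n) := by
  obtain ⟨m, rfl⟩ : ∃ m, n = m + 1 := ⟨n - 1, by omega⟩
  rw [show 2 * (m + 1) + 1 = (2 * m + 1) + 2 by ring, tr]
  have h1 : (2 * m + 1 + 2) % 2 = 1 := by omega
  have h2 : (2 * m + 1 + 2) / 2 = m + 1 := by omega
  simp [h1, h2]

/-- The images of the generators in `Perm (ℤ × ℤ)`. -/
noncomputable def FF (p : ℕ) : ℕ+ → Equiv.Perm (ℤ × ℤ) := fun i => evalD p (tr i)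

lemma FF_rel (p : ℕ) (i : ℕ+) : FF p i = ⁅FF p (2 * i), FF p (2 * i + 1)⁆ := by
  have h1 : ((2 * i : ℕ+) : ℕ) = 2 * (i : ℕ) := by simp
  have h2 : ((2 * i + 1 : ℕ+) : ℕ) = 2 * (i : ℕ) + 1 := by simp
  unfold FF
  rw [h1, h2, tr_two_mul (i : ℕ) i.pos, tr_two_mul_add_one (i : ℕ) i.pos]
  exact evalD_commutator p (tr i)

lemma lift_rels (p : ℕ) : ∀ r ∈ hRels, FreeGroup.lift (FF p) r = 1 := by
  rintro r ⟨i, rfl⟩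
  rw [map_mul, map_inv, map_commutatorElement, FreeGroup.lift_apply_of, FreeGroup.lift_apply_of,
    FreeGroup.lift_apply_of, ← FF_rel p i, mul_inv_cancel]

lemma sigma_pow_nat (p : ℕ) (k : ℕ) (hk : k < p) : (sigma p ^ k) (0 : ℤ) = k := by
  induction k with
  | zero => simp
  | succ k ih =>
    rw [pow_succ', Equiv.Perm.mul_apply, ih (by omega)]
    show (if 0 ≤ (k : ℤ) ∧ (k : ℤ) + 1 < p then (k : ℤ) + 1
      else if 0 ≤ (k : ℤ) ∧ (k : ℤ) + 1 = p then 0 else (k : ℤ)) = ((k + 1 : ℕ) : ℤ)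
    have : ((k : ℤ)) + 1 < p := by exact_mod_cast hk
    push_cast
    split_ifs <;> omega

lemma sigma_pow_p (p : ℕ) (hp2 : 2 ≤ p) : (sigma p ^ p) (0 : ℤ) = 0 := by
  obtain ⟨q, rfl⟩ : ∃ q, p = q + 1 := ⟨p - 1, by omega⟩
  rw [pow_succ', Equiv.Perm.mul_apply, sigma_pow_nat _ q (by omega)]
  show (if 0 ≤ (q : ℤ) ∧ (q : ℤ) + 1 < (q + 1 : ℕ) then (q : ℤ) + 1
    else if 0 ≤ (q : ℤ) ∧ (q : ℤ) + 1 = (q + 1 : ℕ) then 0 else (q : ℤ)) = 0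
  push_cast
  split_ifs <;> omega

lemma cpow_apply (p : ℕ) (m : ℕ) :
    ((evalD p (.W delta)) ^ m) ((0 : ℤ), (0 : ℤ)) = ((sigma p ^ m) 0, 0) := by
  induction m with
  | zero => simp
  | succ m ih =>
    rw [pow_succ', Equiv.Perm.mul_apply, ih]
    show ((sigma p ^ delta 0) ((sigma p ^ m) 0), (0 : ℤ)) = _
    rw [pow_succ', Equiv.Perm.mul_apply]
    norm_num [delta]

lemma sigma_moved (p : ℕ) (a : ℤ) (h : sigma p a ≠ a) : 0 ≤ a ∧ a < p := by
  by_contra hcon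
  apply h
  show (if 0 ≤ a ∧ a + 1 < p then a + 1 else if 0 ≤ a ∧ a + 1 = p then 0 else a) = a
  split_ifs <;> omega

lemma no_p_root (p : ℕ) (hp : p.Prime) (τ : Equiv.Perm (ℤ × ℤ)) :
    τ ^ p ≠ evalD p (.W delta) := by
  intro hτ
  have hp2 : 2 ≤ p := hp.two_le
  have hx₀ : ∀ m : ℕ, (τ ^ (p * m)) ((0:ℤ), (0:ℤ)) = ((sigma p ^ m) 0, 0) := by
    intro m
    rw [pow_mul, hτ]
    exact cpow_apply p m
  -- τ^(p*p) fixes (0,0)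
  have hfix : (τ ^ (p * p)) ((0:ℤ), (0:ℤ)) = ((0:ℤ), (0:ℤ)) := by
    rw [hx₀ p, sigma_pow_p p hp2]
  -- τ^p moves (0,0)
  have hpx : (τ ^ p) ((0:ℤ), (0:ℤ)) ≠ ((0:ℤ), (0:ℤ)) := by
    have h1 := hx₀ 1
    rw [mul_one, pow_one] at h1
    rw [h1]
    have : (sigma p) (0:ℤ) = 1 := by
      show (if (0:ℤ) ≤ 0 ∧ (0:ℤ) + 1 < p then (0:ℤ) + 1
        else if (0:ℤ) ≤ 0 ∧ (0:ℤ) + 1 = p then 0 else 0) = 1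
      split_ifs <;> omega
    rw [this]
    simp
  -- all powers τ^m with 0 < m < p*p move (0,0)
  have hfree : ∀ m : ℕ, 0 < m → m < p * p → (τ ^ m) ((0:ℤ), (0:ℤ)) ≠ ((0:ℤ), (0:ℤ)) := by
    intro m hm1 hm2 hfx
    set d := Nat.gcd m (p * p) with hd
    have hdpos : 0 < d := Nat.gcd_pos_of_pos_left _ hm1
    have hdle : d ≤ m := Nat.gcd_le_left _ hm1
    have hddvd : d ∣ p ^ 2 := by rw [sq]; exact Nat.gcd_dvd_right m (p * p)
    obtain ⟨i, hi, hdi⟩ := (Nat.dvd_prime_pow hp).mp hddvd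
    have hip : d ∣ p := by
      interval_cases i
      · rw [hdi, pow_zero]; exact one_dvd p
      · rw [hdi, pow_one]
      · exfalso; rw [hdi, sq] at hdle; omega
    have hdfix : (τ ^ d) ((0:ℤ), (0:ℤ)) = ((0:ℤ), (0:ℤ)) := by
      have hbez : (d : ℤ) = m * Nat.gcdA m (p * p) + (p * p) * Nat.gcdB m (p * p) :=
        Nat.gcd_eq_gcd_ab m (p * p)
      have key : (τ ^ (d : ℤ)) ((0:ℤ), (0:ℤ)) = ((0:ℤ), (0:ℤ)) := by
        rw [hbez, zpow_add, Equiv.Perm.mul_apply, zpow_mul, zpow_mul, zpow_natCast,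
          show ((p : ℤ) * p) = ((p * p : ℕ) : ℤ) by push_cast; ring, zpow_natCast]
        have h2 : ((τ ^ (p * p)) ^ Nat.gcdB m (p * p)) ((0:ℤ), (0:ℤ)) = ((0:ℤ), (0:ℤ)) :=
          Function.IsFixedPt.perm_zpow hfix _
        have h1 : ((τ ^ m) ^ Nat.gcdA m (p * p)) ((0:ℤ), (0:ℤ)) = ((0:ℤ), (0:ℤ)) :=
          Function.IsFixedPt.perm_zpow hfx _
        rw [h2, h1]
      rw [← zpow_natCast]
      exact key
    apply hpx
    obtain ⟨e, he⟩ := hip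
    rw [he, pow_mul]
    exact Function.IsFixedPt.perm_pow hdfix e
  -- the orbit map is injective on range (p*p)
  have horb : ∀ j l : ℕ, j < l → l < p * p →
      (τ ^ l) ((0:ℤ), (0:ℤ)) ≠ (τ ^ j) ((0:ℤ), (0:ℤ)) := by
    intro j l hjl hl heq
    apply hfree (l - j) (by omega) (by omega)
    apply (τ ^ j).injective
    rw [← Equiv.Perm.mul_apply, ← pow_add]
    rw [show j + (l - j) = l by omega, heq]
  have hinj : Set.InjOn (fun j => (τ ^ j) ((0:ℤ), (0:ℤ))) (Finset.range (p * p)) := by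
    intro j hj l hl heq
    simp only [Finset.coe_range, Set.mem_Iio] at hj hl
    rcases lt_trichotomy j l with h | h | h
    · exact absurd heq.symm (horb j l h hl)
    · exact h
    · exact absurd heq (horb l j h hj)
  -- every orbit point is in the support of evalD p (.W delta)
  have hmap : ∀ j ∈ Finset.range (p * p),
      (τ ^ j) ((0:ℤ), (0:ℤ)) ∈ (Finset.Ico (0:ℤ) (p:ℤ)) ×ˢ ({(0:ℤ)} : Finset ℤ) := by
    intro j hj
    simp only [Finset.mem_range] at hj
    set y := (τ ^ j) ((0:ℤ), (0:ℤ)) with hy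
    have hmoved : evalD p (.W delta) y ≠ y := by
      rw [← hτ, hy, ← Equiv.Perm.mul_apply, ← pow_add]
      intro h
      apply hpx
      apply (τ ^ j).injective
      rw [← Equiv.Perm.mul_apply, ← pow_add, add_comm j p, h]
    have hy2 : y.2 = 0 := by
      by_contra h2
      apply hmoved
      show ((sigma p ^ delta y.2) y.1, y.2) = y
      rw [show delta y.2 = 0 from if_neg h2, zpow_zero]
      simp
    have hy1 : sigma p y.1 ≠ y.1 := by
      intro h1
      apply hmoved
      have hd0 : delta y.2 = 1 := by rw [hy2]; exact if_pos rfl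
      show ((sigma p ^ delta y.2) y.1, y.2) = y
      rw [hd0, zpow_one, h1]
    obtain ⟨ha, hb⟩ := sigma_moved p y.1 hy1
    rw [Finset.mem_product, Finset.mem_Ico, Finset.mem_singleton]
    exact ⟨⟨ha, hb⟩, hy2⟩
  -- counting
  have hcard := Finset.card_le_card_of_injOn _ hmap hinj
  rw [Finset.card_range, Finset.card_product, Int.card_Ico, Finset.card_singleton] at hcard
  simp only [sub_zero, Int.toNat_natCast, mul_one] at hcard
  nlinarith

lemma tr_one : tr 1 = .W delta := by rw [tr]

/-- In `𝓗 = ⟨x₁, x₂, … ∣ xᵢ = ⁅x_{2i}, x_{2i+1}⁆⟩`, the generator `x₁` has no `p`-th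
root for any prime `p`; in particular `𝓗` is not uniquely `p`-divisible. -/
theorem generator_has_no_p_root (p : ℕ) (hp : p.Prime) :
    (¬∃ y : PresentedGroup hRels, y ^ p = PresentedGroup.of (1 : ℕ+)) ∧
      ¬Function.Bijective fun x : PresentedGroup hRels => x ^ p := by
  have key : ¬∃ y : PresentedGroup hRels, y ^ p = PresentedGroup.of (1 : ℕ+) := by
    rintro ⟨y, hy⟩
    apply no_p_root p hp (PresentedGroup.toGroup (lift_rels p) y)
    rw [← map_pow, hy, PresentedGroup.toGroup.of]
    show evalD p (tr ((1 : ℕ+) : ℕ)) = evalD p (.W delta)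
    rw [PNat.one_coe, tr_one]
  refine ⟨key, fun hbij => ?_⟩
  obtain ⟨y, hy⟩ := hbij.2 (PresentedGroup.of (1 : ℕ+))
  exact key ⟨y, hy⟩
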